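/- Fix β > 0. Define α = [0; a_1, a_2, …] with continued fraction coefficients chosen inductively: a_i = 1 for 1 ≤ i ≤ n_0 (n_0 large), and having defined denominators q_n via the recursion q_n = a_n q_{n−1} + q_{n−2}, set n_k = q_{n_0} + q_{n_1} + ⋯ + q_{n_{k−1}} and put a_n = ⌈e^{β q_{n_k}}⌉ if n = n_k + 1 and a_n = 1 otherwise. Then β(α) := limsup_n (log q_{n+1})/q_n = β > 0, while K_*(α) := liminf_k (a_1 a_2 ⋯ a_k)^{1/k} ≤ e^β < ∞. -/

import Mathlib

open Filter Real

/-- Construction of a frequency with `β(α) = β > 0` but `K_*(α) ≤ e^β < ∞`: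
with continued fraction coefficients `a_i = 1` for `i ≤ n₀`, denominators
`q_n = a_n q_{n−1} + q_{n−2}`, the indices `n_k` defined by `n_0 = n₀`,
`n_1 = q_{n_0}`, `n_{k+1} = n_k + q_{n_k}`, and `a_n = ⌈e^{β q_{n_k}}⌉` if
`n = n_k + 1`, `a_n = 1` otherwise, one has
`limsup (log q_{n+1})/q_n = β` and `liminf (a_1 ⋯ a_k)^{1/k} ≤ e^β`. -/
theorem stmt_16 (β : ℝ) (hβ : 0 < β) (n₀ : ℕ) (hn₀ : 2 ≤ n₀)
    (a q nk : ℕ → ℕ)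
    (hq0 : q 0 = 1) (hq1 : q 1 = a 1)
    (hqrec : ∀ n, 2 ≤ n → q n = a n * q (n - 1) + q (n - 2))
    (hnk0 : nk 0 = n₀) (hnk1 : nk 1 = q (nk 0))
    (hnkrec : ∀ k, 1 ≤ k → nk (k + 1) = nk k + q (nk k))
    (ha1 : ∀ i, 1 ≤ i → i ≤ n₀ → a i = 1)
    (ha2 : ∀ n k, n = nk k + 1 → a n = ⌈Real.exp (β * q (nk k))⌉₊)
    (ha3 : ∀ n, 1 ≤ n → (¬ ∃ k, n = nk k + 1) → a n = 1) :
    Filter.limsup (fun n => Real.log (q (n + 1)) / q n) Filter.atTop = β ∧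
    Filter.liminf (fun k => (∏ i ∈ Finset.Icc 1 k, (a i : ℝ)) ^ ((1 : ℝ) / k))
        Filter.atTop ≤ Real.exp β := by
  -- all coefficients are at least 1
  have haq : ∀ n, 1 ≤ n → 1 ≤ a n := by
    intro n hn
    by_cases h : ∃ k, n = nk k + 1
    · obtain ⟨k, hk⟩ := h
      rw [ha2 n k hk]
      exact Nat.one_le_ceil_iff.2 (Real.exp_pos _)
    · rw [ha3 n hn h]
  -- denominators are at least 1
  have hq_pos : ∀ n, 1 ≤ q n := by
    intro n
    induction n using Nat.strong_induction_on with
    | _ n ih =>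
      match n with
      | 0 => rw [hq0]
      | 1 => rw [hq1]; exact haq 1 le_rfl
      | (m+2) =>
        rw [hqrec (m+2) (by omega)]
        have h1 := ih m (by omega)
        simp only [Nat.add_sub_cancel]
        omega
  have hq_succ : ∀ n, 1 ≤ n → q n + 1 ≤ q (n+1) := by
    intro n hn
    rw [hqrec (n+1) (by omega)]
    simp only [Nat.add_sub_cancel]
    have h1 := hq_pos (n+1-2)
    have h2 := haq (n+1) (by omega)
    have h3 : q n ≤ a (n+1) * q n := Nat.le_mul_of_pos_left _ h2
    omega
  have hq_mono : Monotone q := by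
    apply monotone_nat_of_le_succ
    intro n
    match n with
    | 0 => rw [hq0]; exact hq_pos 1
    | (m+1) => exact le_of_lt (hq_succ (m+1) (by omega))
  have hq_ge : ∀ n, n ≤ q n := by
    intro n
    induction n with
    | zero => exact Nat.zero_le _
    | succ m ih =>
      match m with
      | 0 => exact hq_pos 1
      | (k+1) => have := hq_succ (k+1) (by omega); omega
  have hnk_mono : Monotone nk := by
    apply monotone_nat_of_le_succ
    intro k
    match k with
    | 0 => rw [hnk1, hnk0]; exact hq_ge n₀
    | (m+1) => rw [hnkrec (m+1) (by omega)]; exact Nat.le_add_right _ _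
  have hnk_ge2 : ∀ k, 2 ≤ nk k := by
    intro k
    have := hnk_mono (Nat.zero_le k)
    omega
  have hnk_two_pow : ∀ m, 1 ≤ m → 2^m ≤ nk m := by
    intro m hm
    induction m, hm using Nat.le_induction with
    | base => rw [hnk1, hnk0]; have := hq_ge n₀; simpa using le_trans hn₀ this
    | succ m hm ih =>
      rw [hnkrec m hm]
      have := hq_ge (nk m)
      have : 2^m + 2^m ≤ nk m + q (nk m) := by omega
      calc 2^(m+1) = 2^m + 2^m := by ring
      _ ≤ nk m + q (nk m) := this
  have hnk_sq : ∀ m, 4 ≤ m → m^2 ≤ nk m := by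
    intro m hm
    induction m, hm using Nat.le_induction with
    | base => have := hnk_two_pow 4 (by omega); omega
    | succ m hm ih =>
      rw [hnkrec m (by omega)]
      have h1 := hq_ge (nk m)
      nlinarith
  have hnk_gt : ∀ m, 1 ≤ m → m < nk m := by
    intro m hm
    exact lt_of_lt_of_le (Nat.lt_two_pow_self (n := m)) (hnk_two_pow m hm)
  -- upper bound on q (n+1)
  have hexp_add : ∀ x : ℝ, 0 ≤ x → Real.exp x + 1 ≤ Real.exp (x+1) := by
    intro x hx
    rw [Real.exp_add]
    nlinarith [Real.one_le_exp hx, Real.exp_one_gt_d9]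
  have hL1 : ∀ n, 1 ≤ n → (q (n+1) : ℝ) ≤ 3 * q n * Real.exp (β * q n) := by
    intro n hn
    have hrec := hqrec (n+1) (by omega)
    simp only [Nat.add_sub_cancel] at hrec
    have hn1 : n + 1 - 2 = n - 1 := by omega
    rw [hn1] at hrec
    have hqn1 : (q (n-1) : ℝ) ≤ q n := Nat.cast_le.2 (hq_mono (by omega))
    have hqnpos : (1:ℝ) ≤ q n := by exact_mod_cast hq_pos n
    have hexp1 : (1:ℝ) ≤ Real.exp (β * q n) := Real.one_le_exp (by positivity)
    by_cases hsp : ∃ k, n + 1 = nk k + 1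
    · obtain ⟨k, hk⟩ := hsp
      have hnkk : nk k = n := by omega
      have ha' := ha2 (n+1) k hk
      rw [hnkk] at ha'
      have hceil : (a (n+1) : ℝ) ≤ Real.exp (β * q n) + 1 := by
        rw [ha']
        exact (Nat.ceil_lt_add_one (le_of_lt (Real.exp_pos _))).le
      rw [hrec]
      push_cast
      nlinarith [Real.exp_pos (β * q n)]
    · have ha' := ha3 (n+1) (by omega) hsp
      rw [hrec, ha']
      push_cast
      nlinarith
  -- lower bound along the subsequence nk
  have hL2 : ∀ k, β ≤ Real.log (q (nk k + 1)) / q (nk k) := by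
    intro k
    set n := nk k with hn
    have hn2 : 2 ≤ n := hnk_ge2 k
    have hrec := hqrec (n+1) (by omega)
    simp only [Nat.add_sub_cancel] at hrec
    have ha' : a (n+1) = ⌈Real.exp (β * q n)⌉₊ := ha2 (n+1) k rfl
    have h1 : Real.exp (β * q n) ≤ (q (n+1) : ℝ) := by
      calc Real.exp (β * q n) ≤ (⌈Real.exp (β * q n)⌉₊ : ℝ) := Nat.le_ceil _
      _ ≤ (q (n+1) : ℝ) := by
        rw [hrec, ← ha']
        have h2 := hq_pos n
        have h3 : a (n+1) ≤ a (n+1) * q n := Nat.le_mul_of_pos_right _ h2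
        exact_mod_cast le_trans h3 (Nat.le_add_right _ _)
    have h2 : β * q n ≤ Real.log (q (n+1)) := by
      rw [← Real.log_exp (β * q n)]
      exact Real.log_le_log (Real.exp_pos _) h1
    have hqpos : (0:ℝ) < q n := by exact_mod_cast hq_pos n
    rw [le_div_iff₀ hqpos]
    exact h2
  -- the comparison sequence
  set v : ℕ → ℝ := fun n => β + (Real.log 3 / q n + Real.log (q n) / q n) with hv_def
  have hqtop : Tendsto (fun n => (q n : ℝ)) atTop atTop :=
    tendsto_natCast_atTop_atTop.comp (tendsto_atTop_mono hq_ge tendsto_id)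
  have hlogq : Tendsto (fun n => Real.log (q n) / q n) atTop (nhds 0) :=
    (Real.isLittleO_log_id_atTop.tendsto_div_nhds_zero).comp hqtop
  have hinvq : Tendsto (fun n => Real.log 3 / (q n : ℝ)) atTop (nhds 0) :=
    tendsto_const_nhds.div_atTop hqtop
  have hv : Tendsto v atTop (nhds β) := by
    have := (tendsto_const_nhds : Tendsto (fun _ : ℕ => β) atTop (nhds β)).add (hinvq.add hlogq)
    simpa using this
  have huv : ∀ᶠ n in atTop, Real.log (q (n+1)) / q n ≤ v n := by
    rw [eventually_atTop]
    refine ⟨1, fun n hn => ?_⟩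
    have hqpos : (0:ℝ) < q n := by exact_mod_cast hq_pos n
    have hq1pos : (0:ℝ) < q (n+1) := by exact_mod_cast hq_pos (n+1)
    have h1 : Real.log (q (n+1)) ≤ Real.log 3 + Real.log (q n) + β * q n := by
      calc Real.log (q (n+1)) ≤ Real.log (3 * q n * Real.exp (β * q n)) :=
        Real.log_le_log hq1pos (hL1 n hn)
      _ = Real.log 3 + Real.log (q n) + β * q n := by
        rw [Real.log_mul (by positivity) (by positivity),
          Real.log_mul (by norm_num) (by positivity), Real.log_exp]
    calc Real.log (q (n+1)) / q n ≤ (Real.log 3 + Real.log (q n) + β * q n) / q n :=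
      (div_le_div_iff_of_pos_right hqpos).2 h1
    _ = v n := by simp only [hv_def, add_div, mul_div_assoc, div_self hqpos.ne', mul_one]; ring
  have hbdd_v : IsBoundedUnder (· ≤ ·) atTop v := hv.isBoundedUnder_le
  have hbdd_u : IsBoundedUnder (· ≤ ·) atTop (fun n => Real.log (q (n+1)) / q n) :=
    hbdd_v.mono_le huv
  have hfreq : ∃ᶠ n in atTop, β ≤ Real.log (q (n+1)) / q n := by
    rw [frequently_atTop]
    intro N
    refine ⟨nk N, ?_, hL2 N⟩
    rcases Nat.eq_zero_or_pos N with h | h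
    · simp [h]
    · exact (hnk_gt N h).le
  have hcob_u : IsCoboundedUnder (· ≤ ·) atTop (fun n => Real.log (q (n+1)) / q n) := by
    apply isCoboundedUnder_le_of_eventually_le (x := 0) atTop
    filter_upwards with n
    have h1 : (1:ℝ) ≤ q (n+1) := by exact_mod_cast hq_pos (n+1)
    have h2 : (0:ℝ) ≤ q n := by positivity
    exact div_nonneg (Real.log_nonneg h1) h2
  have hlimsup : Filter.limsup (fun n => Real.log (q (n + 1)) / q n) Filter.atTop = β := by
    refine le_antisymm ?_ (le_limsup_of_frequently_le hfreq hbdd_u)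
    calc Filter.limsup (fun n => Real.log (q (n + 1)) / q n) Filter.atTop
        ≤ Filter.limsup v atTop := limsup_le_limsup huv hcob_u hbdd_v
    _ = β := hv.limsup_eq
  refine ⟨hlimsup, ?_⟩
  -- the big partial quotients, bounded
  have hstep_a : ∀ m, (a (nk m + 1) : ℝ) ≤ Real.exp (β * q (nk m) + 1) := by
    intro m
    rw [ha2 (nk m + 1) m rfl]
    have h0 : (0:ℝ) ≤ β * q (nk m) := by positivity
    calc ((⌈Real.exp (β * q (nk m))⌉₊ : ℝ)) ≤ Real.exp (β * q (nk m)) + 1 :=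
      (Nat.ceil_lt_add_one (Real.exp_pos _).le).le
    _ ≤ Real.exp (β * q (nk m) + 1) := hexp_add _ h0
  have hIcc : ∀ x : ℕ, Finset.Icc 1 x = Finset.Ioc 0 x := fun x => Finset.Icc_add_one_left_eq_Ioc 0 x
  -- the key product estimate
  have hM : ∀ m, 1 ≤ m → (∏ i ∈ Finset.Icc 1 (nk m), (a i : ℝ)) ≤ Real.exp (β * nk m + m) := by
    intro m hm
    induction m, hm using Nat.le_induction with
    | base =>
      rcases le_or_gt (n₀ + 1) (q n₀) with hcase | hcase
      · have hmem : n₀ + 1 ∈ Finset.Icc 1 (nk 1) := by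
          rw [hnk1, hnk0]; exact Finset.mem_Icc.2 ⟨by omega, hcase⟩
        have hprod : (∏ i ∈ Finset.Icc 1 (nk 1), (a i : ℝ)) = (a (n₀+1) : ℝ) := by
          apply Finset.prod_eq_single_of_mem _ hmem
          intro i hi hne
          rw [Finset.mem_Icc, hnk1, hnk0] at hi
          norm_cast
          rcases le_or_gt i n₀ with h | h
          · exact ha1 i hi.1 h
          · apply ha3 i hi.1
            rintro ⟨j, hj⟩
            have hj1 : j ≠ 0 := by rintro rfl; rw [hnk0] at hj; omega
            have hmono := hnk_mono (show 1 ≤ j by omega)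
            rw [hnk1, hnk0] at hmono
            omega
        rw [hprod]
        have h := hstep_a 0
        rw [hnk0] at h
        calc (a (n₀+1):ℝ) ≤ Real.exp (β * q n₀ + 1) := h
        _ = Real.exp (β * nk 1 + 1) := by rw [hnk1, hnk0]
        _ = Real.exp (β * nk 1 + (1:ℕ)) := by norm_num
      · have hprod : (∏ i ∈ Finset.Icc 1 (nk 1), (a i : ℝ)) = 1 := by
          apply Finset.prod_eq_one
          intro i hi
          rw [Finset.mem_Icc, hnk1, hnk0] at hi
          norm_cast
          exact ha1 i hi.1 (by omega)
        rw [hprod]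
        exact Real.one_le_exp (by positivity)
    | succ m hm ih =>
      have hrec := hnkrec m hm
      have hle : nk m ≤ nk (m+1) := hnk_mono (by omega)
      have hqnk := hq_pos (nk m)
      have hsplit : (∏ i ∈ Finset.Icc 1 (nk (m+1)), (a i : ℝ))
          = (∏ i ∈ Finset.Icc 1 (nk m), (a i : ℝ)) *
            ∏ i ∈ Finset.Ioc (nk m) (nk (m+1)), (a i : ℝ) := by
        rw [hIcc, hIcc]
        exact (Finset.prod_Ioc_consecutive _ (Nat.zero_le (nk m)) hle).symm
      have hblock : (∏ i ∈ Finset.Ioc (nk m) (nk (m+1)), (a i : ℝ)) = (a (nk m + 1) : ℝ) := by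
        apply Finset.prod_eq_single_of_mem
        · rw [Finset.mem_Ioc]
          exact ⟨by omega, by omega⟩
        · intro i hi hne
          rw [Finset.mem_Ioc] at hi
          norm_cast
          apply ha3 i (by omega)
          rintro ⟨j, hj⟩
          by_cases hjm : j ≤ m
          · have := hnk_mono hjm; omega
          · have := hnk_mono (show m + 1 ≤ j by omega); omega
      rw [hsplit, hblock]
      calc (∏ i ∈ Finset.Icc 1 (nk m), (a i : ℝ)) * (a (nk m + 1) : ℝ)
          ≤ Real.exp (β * nk m + m) * Real.exp (β * q (nk m) + 1) := by
            apply mul_le_mul ih (hstep_a m) (Nat.cast_nonneg _) (Real.exp_pos _).le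
      _ = Real.exp (β * nk (m+1) + (m+1)) := by
          rw [← Real.exp_add]
          congr 1
          rw [hrec]
          push_cast
          ring
      _ = Real.exp (β * nk (m+1) + ((m+1 : ℕ) : ℝ)) := by norm_cast
  have hkey : ∀ m, 1 ≤ m →
      (∏ i ∈ Finset.Icc 1 (nk m), (a i : ℝ)) ^ ((1:ℝ)/(nk m)) ≤ Real.exp (β + m / nk m) := by
    intro m hm
    have hpos : (0:ℝ) < nk m := by
      have := hnk_ge2 m; exact_mod_cast (by omega : 0 < nk m)
    have hnn : (0:ℝ) ≤ ∏ i ∈ Finset.Icc 1 (nk m), (a i : ℝ) :=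
      Finset.prod_nonneg fun i _ => Nat.cast_nonneg _
    calc (∏ i ∈ Finset.Icc 1 (nk m), (a i : ℝ)) ^ ((1:ℝ)/(nk m))
        ≤ (Real.exp (β * nk m + m)) ^ ((1:ℝ)/(nk m)) :=
          Real.rpow_le_rpow hnn (hM m hm) (by positivity)
    _ = Real.exp ((β * nk m + m) * ((1:ℝ)/(nk m))) := (Real.exp_mul _ _).symm
    _ = Real.exp (β + m / nk m) := by
        congr 1
        field_simp
  have hdiv : Tendsto (fun m : ℕ => (m:ℝ) / nk m) atTop (nhds 0) := by
    apply tendsto_of_tendsto_of_tendsto_of_le_of_le'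
      (tendsto_const_nhds : Tendsto (fun _ : ℕ => (0:ℝ)) atTop (nhds 0))
      tendsto_one_div_atTop_nhds_zero_nat
    · filter_upwards with m
      have h2 : (0:ℝ) ≤ nk m := Nat.cast_nonneg _
      positivity
    · filter_upwards [eventually_ge_atTop 4] with m hm
      have h1 : ((m:ℝ))^2 ≤ nk m := by exact_mod_cast hnk_sq m hm
      have hm0 : (0:ℝ) < m := by exact_mod_cast (by omega : 0 < m)
      rw [div_le_div_iff₀ (by nlinarith) hm0]
      nlinarith
  have hE : Tendsto (fun m : ℕ => Real.exp (β + m / nk m)) atTop (nhds (Real.exp β)) := by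
    have h := (tendsto_const_nhds : Tendsto (fun _ : ℕ => β) atTop (nhds β)).add hdiv
    rw [add_zero] at h
    exact (Real.continuous_exp.tendsto _).comp h
  have hbdd : IsBoundedUnder (· ≥ ·) atTop
      (fun k => (∏ i ∈ Finset.Icc 1 k, (a i : ℝ)) ^ ((1 : ℝ) / k)) := by
    apply isBoundedUnder_of
    exact ⟨0, fun k => Real.rpow_nonneg (Finset.prod_nonneg fun i _ => Nat.cast_nonneg _) _⟩
  have hmain : ∀ ε : ℝ, 0 < ε →
      Filter.liminf (fun k => (∏ i ∈ Finset.Icc 1 k, (a i : ℝ)) ^ ((1 : ℝ) / k))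
        Filter.atTop ≤ Real.exp β + ε := by
    intro ε hε
    apply liminf_le_of_frequently_le _ hbdd
    rw [frequently_atTop]
    intro N
    have hev : ∀ᶠ m : ℕ in atTop, Real.exp (β + m / nk m) < Real.exp β + ε :=
      hE.eventually_lt_const (by linarith)
    obtain ⟨m, hm1, hm2⟩ := ((eventually_ge_atTop (max N 1)).and hev).exists
    have hm1' : 1 ≤ m := le_trans (le_max_right N 1) hm1
    refine ⟨nk m, ?_, ?_⟩
    · have := hnk_gt m hm1'
      have := le_trans (le_max_left N 1) hm1
      omega
    · exact le_of_lt (lt_of_le_of_lt (hkey m hm1') hm2)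
  by_contra hcon
  push_neg at hcon
  have := hmain ((Filter.liminf (fun k => (∏ i ∈ Finset.Icc 1 k, (a i : ℝ)) ^ ((1 : ℝ) / k))
        Filter.atTop - Real.exp β)/2) (by linarith)
  linarith
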